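/- arXiv:2001.09685 — 2 statements merged into one kernel-verified Lean document; each statement's English description precedes it below -/
import Mathlib

section
/- For every integer m ≥ 2, the function f_m(p) = 2(H₂(p) + (1−p)·log₂(m−1))/(p+3) is continuous on [0,1] and attains its maximum R(m) = max_{p∈[0,1]} f_m(p) at a unique point; moreover, for m ≥ 3 this maximizer lies in the open interval (0,1). -/
/-- Binary entropy function (base 2), with the convention `0 · log 0 = 0`
(automatic since `Real.logb 2 0 = 0`). -/
noncomputable def H2 (p : ℝ) : ℝ :=
  -p * Real.logb 2 p - (1 - p) * Real.logb 2 (1 - p)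

/-- The rate function `f_m(p) = 2 (H₂(p) + (1−p) log₂(m−1))/(p+3)` of the
coding scheme for the Ising channel with alphabet of size `m`. -/
noncomputable def fm (m : ℕ) (p : ℝ) : ℝ :=
  2 * (H2 p + (1 - p) * Real.logb 2 ((m : ℝ) - 1)) / (p + 3)

lemma H2_eq (p : ℝ) : H2 p = Real.binEntropy p / Real.log 2 := by
  rw [Real.binEntropy_eq_negMulLog_add_negMulLog_one_sub]
  simp only [H2, Real.negMulLog, Real.logb]
  ring

lemma H2_continuous : Continuous H2 := by
  have : H2 = fun p => Real.binEntropy p / Real.log 2 := funext H2_eq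
  rw [this]
  exact Real.binEntropy_continuous.div_const _

lemma H2_zero : H2 0 = 0 := by simp [H2]

lemma H2_one : H2 1 = 0 := by simp [H2]

lemma H2_strictConcave : StrictConcaveOn ℝ (Set.Icc (0:ℝ) 1) H2 := by
  have hL : (0:ℝ) < Real.log 2 := Real.log_pos one_lt_two
  refine ⟨convex_Icc _ _, fun x hx y hy hxy a b ha hb hab => ?_⟩
  have h := Real.strictConcave_binEntropy.2 hx hy hxy ha hb hab
  simp only [smul_eq_mul] at h ⊢
  rw [H2_eq, H2_eq, H2_eq, lt_div_iff₀ hL]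
  calc (a * (Real.binEntropy x / Real.log 2) + b * (Real.binEntropy y / Real.log 2)) *
        Real.log 2
      = a * Real.binEntropy x + b * Real.binEntropy y := by field_simp
    _ < Real.binEntropy (a * x + b * y) := h

/-- For every `m ≥ 2`, `f_m` is continuous on `[0,1]` and attains its maximum
over `[0,1]` at a unique point; for `m ≥ 3` this maximizer lies in `(0,1)`. -/
theorem stmt8 (m : ℕ) (hm : 2 ≤ m) :
    ContinuousOn (fm m) (Set.Icc (0 : ℝ) 1) ∧
    (∃! p, p ∈ Set.Icc (0 : ℝ) 1 ∧ ∀ q ∈ Set.Icc (0 : ℝ) 1, fm m q ≤ fm m p) ∧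
    (3 ≤ m → ∀ p,
      (p ∈ Set.Icc (0 : ℝ) 1 ∧ ∀ q ∈ Set.Icc (0 : ℝ) 1, fm m q ≤ fm m p) →
        p ∈ Set.Ioo (0 : ℝ) 1) := by
  set c : ℝ := Real.logb 2 ((m : ℝ) - 1) with hc
  have hm1 : (1:ℝ) ≤ (m:ℝ) - 1 := by
    have : (2:ℝ) ≤ (m:ℝ) := by exact_mod_cast hm
    linarith
  have hc0 : 0 ≤ c := Real.logb_nonneg one_lt_two hm1
  -- the numerator function
  set G : ℝ → ℝ := fun p => 2 * (H2 p + (1 - p) * c) with hG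
  have hfm : ∀ p, fm m p = G p / (p + 3) := fun p => rfl
  -- continuity
  have hGcont : Continuous G := by
    apply Continuous.mul continuous_const
    exact H2_continuous.add (Continuous.mul (by continuity) continuous_const)
  have hcont : ContinuousOn (fm m) (Set.Icc (0:ℝ) 1) := by
    have : ContinuousOn (fun p => G p / (p + 3)) (Set.Icc (0:ℝ) 1) := by
      apply ContinuousOn.div hGcont.continuousOn (by fun_prop)
      intro x hx
      have := hx.1
      intro h; linarith [hx.1]
    exact this
  refine ⟨hcont, ?_, ?_⟩
  · -- existence and uniqueness of maximizer
    obtain ⟨p₀, hp₀, hmax'⟩ := isCompact_Icc.exists_isMaxOn ⟨0, by norm_num⟩ hcont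
    have hmax : ∀ q ∈ Set.Icc (0:ℝ) 1, fm m q ≤ fm m p₀ := fun q hq => hmax' hq
    refine ⟨p₀, ⟨hp₀, hmax⟩, ?_⟩
    -- uniqueness
    have hGconc : StrictConcaveOn ℝ (Set.Icc (0:ℝ) 1) G := by
      refine ⟨convex_Icc _ _, fun x hx y hy hxy a b ha hb hab => ?_⟩
      have h := H2_strictConcave.2 hx hy hxy ha hb hab
      simp only [smul_eq_mul] at h ⊢
      simp only [hG]
      nlinarith
    intro p₁ ⟨hp₁, hmax₁⟩
    by_contra hne
    -- both are maximizers with the same value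
    have hMeq : fm m p₁ = fm m p₀ :=
      le_antisymm (hmax p₁ hp₁) (hmax₁ p₀ hp₀)
    set M := fm m p₀ with hM
    have hG₀ : G p₀ = M * (p₀ + 3) := by
      rw [hM, hfm, div_mul_cancel₀]; intro h; linarith [hp₀.1]
    have hG₁ : G p₁ = M * (p₁ + 3) := by
      rw [← hMeq, hfm, div_mul_cancel₀]; intro h; linarith [hp₁.1]
    set t := (p₁ + p₀) / 2 with ht
    have htmem : t ∈ Set.Icc (0:ℝ) 1 := by
      constructor
      · have := hp₀.1; have := hp₁.1; rw [ht]; linarith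
      · have := hp₀.2; have := hp₁.2; rw [ht]; linarith
    have hGt : M * (t + 3) < G t := by
      have := hGconc.2 hp₁ hp₀ hne (by norm_num : (0:ℝ) < 1/2) (by norm_num : (0:ℝ) < 1/2)
        (by norm_num)
      simp only [smul_eq_mul] at this
      have het : t = 1/2 * p₁ + 1/2 * p₀ := by rw [ht]; ring
      rw [het]
      calc M * (1/2 * p₁ + 1/2 * p₀ + 3) = 1/2 * (M * (p₁ + 3)) + 1/2 * (M * (p₀ + 3)) := by ring
        _ = 1/2 * G p₁ + 1/2 * G p₀ := by rw [hG₀, hG₁]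
        _ < G (1/2 * p₁ + 1/2 * p₀) := this
    have htpos : (0:ℝ) < t + 3 := by linarith [htmem.1]
    have : M < fm m t := by
      rw [hfm, lt_div_iff₀ htpos]
      linarith
    exact absurd (hmax t htmem) (not_le.mpr this)
  · -- interior for m ≥ 3
    intro hm3 p ⟨hp, hmax⟩
    have hm2 : (2:ℝ) ≤ (m:ℝ) - 1 := by
      have : (3:ℝ) ≤ (m:ℝ) := by exact_mod_cast hm3
      linarith
    have hc1 : (1:ℝ) ≤ c := by
      rw [hc]
      calc (1:ℝ) = Real.logb 2 2 := (Real.logb_self_eq_one one_lt_two).symm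
        _ ≤ Real.logb 2 ((m:ℝ) - 1) := Real.logb_le_logb_of_le one_lt_two (by norm_num) hm2
    have hf0 : fm m 0 = 2 * c / 3 := by
      rw [hfm]; simp [hG, H2_zero]
    have hf1 : fm m 1 = 0 := by
      rw [hfm]; simp [hG, H2_one]
    -- a point beating the endpoint 0
    set q : ℝ := (2:ℝ) ^ (-(4 * c / 3 + 1)) with hq
    have hq0 : 0 < q := Real.rpow_pos_of_pos (by norm_num) _
    have hqhalf : q ≤ 1/2 := by
      rw [hq]
      calc (2:ℝ) ^ (-(4 * c / 3 + 1)) ≤ (2:ℝ) ^ (-1 : ℝ) := by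
            apply Real.rpow_le_rpow_of_exponent_le (by norm_num)
            linarith
        _ = 1/2 := by
            rw [Real.rpow_neg_one]; norm_num
    have hqmem : q ∈ Set.Icc (0:ℝ) 1 := ⟨hq0.le, by linarith⟩
    have hlogq : Real.logb 2 q = -(4 * c / 3 + 1) := by
      rw [hq]; exact Real.logb_rpow (by norm_num) (by norm_num)
    have hH2q : q * (4 * c / 3 + 1) ≤ H2 q := by
      have h1 : -(1 - q) * Real.logb 2 (1 - q) ≥ 0 := by
        have hl : Real.logb 2 (1 - q) ≤ 0 := Real.logb_nonpos one_lt_two (by linarith) (by linarith)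
        have : 0 < 1 - q := by linarith
        nlinarith
      have : H2 q = q * (4 * c / 3 + 1) + (-(1 - q) * Real.logb 2 (1 - q)) := by
        simp only [H2, hlogq]; ring
      linarith
    have hfq : fm m 0 < fm m q := by
      rw [hf0, hfm, lt_div_iff₀ (by linarith : (0:ℝ) < q + 3)]
      have : 2 * c / 3 * (q + 3) = 2 * c * q / 3 + 2 * c := by ring
      rw [this]
      have hnum : 2 * c * q / 3 + 2 * c < 2 * (q * (4 * c / 3 + 1) + (1 - q) * c) := by
        nlinarith
      have : 2 * (q * (4 * c / 3 + 1) + (1 - q) * c) ≤ G q := by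
        simp only [hG]; nlinarith
      linarith
    constructor
    · -- p ≠ 0
      rcases lt_or_eq_of_le hp.1 with h | h
      · exact h
      · exfalso
        have hle := hmax q hqmem
        rw [← h] at hle
        linarith
    · -- p ≠ 1
      rcases lt_or_eq_of_le hp.2 with h | h
      · exact h
      · exfalso
        have h0 : fm m 0 ≤ fm m p := hmax 0 (by norm_num)
        rw [h, hf1] at h0
        rw [hf0] at h0
        linarith
end

section
/- Fix a finite alphabet 𝒳 with |𝒳| ≥ 2, a previous symbol s ∈ 𝒳 (the current channel state, known to both encoder and decoder), a message symbol ν ∈ 𝒳, and noise bits b₁, b₂ ∈ {0,1}. Model each Ising channel use with input x and state σ as producing output y = x if the noise bit is 0 and y = σ if the noise bit is 1, with new state x. Run the paper's transmission rule: if ν = s, transmit ν twice; if ν ≠ s, transmit ν once, and if the resulting output differs from ν, transmit ν a second time. Run the paper's decoding rule: if the first received output differs from s, decode it; otherwise decode the next received output. Then for every choice of b₁, b₂, the decoder outputs exactly ν, and the channel state after the symbol's transmission phase equals ν. -/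
/-- One use of the (noise-bit driven) Ising channel: with input `x`, state `σ`
and noise bit `b`, the output is `x` if `b = false` (i.e. `b = 0`) and `σ` if
`b = true` (i.e. `b = 1`); the new state is the input `x`. -/
def isingOut {𝒳 : Type} (x σ : 𝒳) (b : Bool) : 𝒳 :=
  if b = false then x else σ

/-- The per-symbol transmission rule of the scheme, starting from channel state
`s` with message symbol `ν` and noise bits `b₁, b₂`: if `ν = s` transmit `ν`
twice; if `ν ≠ s` transmit `ν` once and, only if the (feedback) output differs
from `ν`, transmit `ν` a second time. Returns the list of channel outputs
together with the channel state at the end of the phase (each use updates the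
state to its input). -/
def transmitSym {𝒳 : Type} [DecidableEq 𝒳] (s ν : 𝒳) (b₁ b₂ : Bool) :
    List 𝒳 × 𝒳 :=
  if ν = s then
    ([isingOut ν s b₁, isingOut ν ν b₂], ν)
  else if isingOut ν s b₁ = ν then
    ([isingOut ν s b₁], ν)
  else
    ([isingOut ν s b₁, isingOut ν ν b₂], ν)

/-- The per-symbol decoding rule: if the first received output differs from the
previously decoded symbol `s`, decode it; otherwise decode the next output. -/
def decodeSym {𝒳 : Type} [DecidableEq 𝒳] (s : 𝒳) (ys : List 𝒳) : 𝒳 :=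
  match ys with
  | [] => s
  | y :: rest => if y ≠ s then y else rest.headD s

/-- For every previous state `s`, message symbol `ν` and noise bits `b₁, b₂`,
the decoder outputs exactly `ν`, and the channel state after the symbol's
transmission phase equals `ν`. -/
theorem stmt10 (𝒳 : Type) [DecidableEq 𝒳] [Fintype 𝒳]
    (hcard : 2 ≤ Fintype.card 𝒳) (s ν : 𝒳) (b₁ b₂ : Bool) :
    decodeSym s (transmitSym s ν b₁ b₂).1 = ν ∧
    (transmitSym s ν b₁ b₂).2 = ν := by
  unfold transmitSym decodeSym isingOut
  by_cases h : ν = s <;> cases b₁ <;> cases b₂ <;> simp [h] <;> simp_all [eq_comm]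
end
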